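/- There exist a measurable space (Ω̄, 𝒢), a 𝒢-measurable random variable Y : Ω̄ → ℝ², a nonempty convex set 𝒬 of probability measures on (Ω̄, 𝒢), and P ∈ 𝒬 such that NA({P}) holds but the one-period no-arbitrage condition NA(𝒬) fails. In particular, the weak no-arbitrage condition (existence of one arbitrage-free prior in the set) does not imply the quasi-sure no-arbitrage condition. -/

import Mathlib

open MeasureTheory Set
open scoped ENNReal

/-- One-period no-arbitrage condition for an `ℝ²`-valued payoff `Y`:
`h·Y ≥ 0` 𝒬-q.s. implies `h·Y = 0` 𝒬-q.s. -/
def NA2 {Ω : Type*} [MeasurableSpace Ω] (𝒬 : Set (Measure Ω))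
    (Y : Ω → EuclideanSpace ℝ (Fin 2)) : Prop :=
  ∀ h : EuclideanSpace ℝ (Fin 2),
    (∀ P ∈ 𝒬, ∀ᵐ ω ∂P, 0 ≤ (inner ℝ h (Y ω) : ℝ)) →
    ∀ P ∈ 𝒬, ∀ᵐ ω ∂P, (inner ℝ h (Y ω) : ℝ) = 0


private lemma ae_half_iff {α} [MeasurableSpace α] {μ : MeasureTheory.Measure α} {p : α → Prop} :
    (∀ᵐ x ∂(2⁻¹ : ℝ≥0∞) • μ, p x) ↔ ∀ᵐ x ∂μ, p x := by
  simp [MeasureTheory.ae_iff]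

/-- There is a one-period market (with `d = 2`) and a nonempty convex set of
priors `𝒬` containing some `P` such that `NA({P})` holds but `NA(𝒬)` fails:
weak no-arbitrage does not imply quasi-sure no-arbitrage. -/
theorem wna_does_not_imply_na :
    ∃ (Ω : Type) (m : MeasurableSpace Ω) (Y : Ω → EuclideanSpace ℝ (Fin 2))
      (𝒬 : Set (@Measure Ω m)) (P : @Measure Ω m),
      @Measurable Ω (EuclideanSpace ℝ (Fin 2)) m inferInstance Y ∧
      𝒬.Nonempty ∧
      (∀ Q ∈ 𝒬, @IsProbabilityMeasure Ω m Q) ∧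
      (∀ P₁ ∈ 𝒬, ∀ P₂ ∈ 𝒬, ∀ t : ℝ≥0∞, t ≤ 1 → t • P₁ + (1 - t) • P₂ ∈ 𝒬) ∧
      P ∈ 𝒬 ∧
      @NA2 Ω m {P} Y ∧
      ¬ @NA2 Ω m 𝒬 Y := by
  classical
  refine ⟨Fin 3, inferInstance,
    ![EuclideanSpace.single 0 (1 : ℝ), EuclideanSpace.single 0 (-1 : ℝ),
      EuclideanSpace.single 1 (1 : ℝ)],
    {Q | IsProbabilityMeasure Q ∧ Q {0} = Q {1}},
    (2⁻¹ : ℝ≥0∞) • Measure.dirac 0 + (2⁻¹ : ℝ≥0∞) • Measure.dirac 1, ?_, ?_, ?_, ?_, ?_, ?_, ?_⟩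
  · exact Measurable.of_discrete
  · -- nonempty: contains dirac 2
    refine ⟨Measure.dirac 2, ⟨inferInstance, ?_⟩⟩
    simp [Measure.dirac_apply' _ (by measurability : MeasurableSet ({0} : Set (Fin 3))),
      Measure.dirac_apply' _ (by measurability : MeasurableSet ({1} : Set (Fin 3)))]
  · exact fun Q hQ => hQ.1
  · -- convexity
    rintro P₁ ⟨hP₁, hP₁'⟩ P₂ ⟨hP₂, hP₂'⟩ t ht
    constructor
    · constructor
      simp only [Measure.add_apply, Measure.smul_apply, smul_eq_mul, hP₁.measure_univ,
        hP₂.measure_univ, mul_one]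
      exact add_tsub_cancel_of_le ht
    · simp only [Measure.add_apply, Measure.smul_apply, smul_eq_mul, hP₁', hP₂']
  · -- P ∈ 𝒬
    constructor
    · constructor
      simp only [Measure.add_apply, Measure.smul_apply, smul_eq_mul, measure_univ, mul_one]
      rw [ENNReal.inv_two_add_inv_two]
    · simp only [Measure.add_apply, Measure.smul_apply, smul_eq_mul,
        Measure.dirac_apply' _ (by measurability : MeasurableSet ({0} : Set (Fin 3))),
        Measure.dirac_apply' _ (by measurability : MeasurableSet ({1} : Set (Fin 3)))]
      norm_num
  · -- NA({P})
    intro h hh P' hP'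
    rw [Set.mem_singleton_iff] at hP'
    subst hP'
    have := hh _ rfl
    rw [ae_add_measure_iff, ae_half_iff, ae_half_iff,
      ae_dirac_iff (by exact MeasurableSet.of_discrete),
      ae_dirac_iff (by exact MeasurableSet.of_discrete)] at this
    obtain ⟨h0, h1⟩ := this
    simp only [Matrix.cons_val_zero, Matrix.cons_val_one, Matrix.head_cons,
      EuclideanSpace.inner_single_right, RCLike.conj_to_real, conj_trivial, one_mul,
      neg_mul] at h0 h1
    have hz : h 0 = 0 := le_antisymm (by linarith) h0
    rw [ae_add_measure_iff, ae_half_iff, ae_half_iff,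
      ae_dirac_iff (by exact MeasurableSet.of_discrete),
      ae_dirac_iff (by exact MeasurableSet.of_discrete)]
    constructor <;>
      simp [Matrix.cons_val_zero, Matrix.cons_val_one, EuclideanSpace.inner_single_right, hz]
  · -- ¬ NA(𝒬)
    intro hNA
    have key := hNA (EuclideanSpace.single 1 (1 : ℝ)) ?_ (Measure.dirac 2) ?_
    · rw [ae_dirac_iff (by exact MeasurableSet.of_discrete)] at key
      simp [EuclideanSpace.inner_single_left] at key
    · intro Q hQ
      filter_upwards with ω
      fin_cases ω <;>
        simp [EuclideanSpace.inner_single_left]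
    · refine ⟨inferInstance, ?_⟩
      simp [Measure.dirac_apply' _ (by measurability : MeasurableSet ({0} : Set (Fin 3))),
        Measure.dirac_apply' _ (by measurability : MeasurableSet ({1} : Set (Fin 3)))]
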